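/- Let f ∈ F₁(a,b) and Γ ⊂ M_b(Ω) satisfy: (a) there exists a nonempty set Ψ ⊂ Γ that is P(Ω)-determining and such that for every ψ ∈ Ψ there exist c₀ ∈ ℝ and ε₀ > 0 with c₀ + εψ ∈ Γ for all |ε| < ε₀; (b) f is strictly convex on a neighborhood of 1; and (c) f* is finite and continuously differentiable on a neighborhood of ν₀ := f'₊(1), the right derivative of f at 1. Let P and Q_n (n ∈ ℤ₊) be probability measures on (Ω,M). If D_f^Γ(Q_n‖P) → 0 or D_f^Γ(P‖Q_n) → 0, then E_{Q_n}[ψ] → E_P[ψ] for every ψ ∈ Ψ. -/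

import Mathlib

open MeasureTheory Filter Set Topology ENNReal
open scoped Classical

noncomputable section

/-- The set of bounded measurable real-valued functions on `Ω`. -/
def Mb (Ω : Type*) [MeasurableSpace Ω] : Set (Ω → ℝ) :=
  {g | Measurable g ∧ ∃ C : ℝ, ∀ x, |g x| ≤ C}

/-- The set of bounded continuous real-valued functions on `S`. -/
def Cb (S : Type*) [TopologicalSpace S] : Set (S → ℝ) :=
  {g | Continuous g ∧ ∃ C : ℝ, ∀ x, |g x| ≤ C}

/-- The positive part of an extended real number, as an element of `ℝ≥0∞`. -/
def posE (x : EReal) : ℝ≥0∞ := if x = ⊤ then ⊤ else ENNReal.ofReal x.toReal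

/-- The extended-real-valued integral of an `EReal`-valued function, defined as the
difference of the lower integrals of the positive and negative parts, with the
convention `∞ - ∞ = -∞`. -/
def eIntegral {Ω : Type*} [MeasurableSpace Ω] (P : Measure Ω) (h : Ω → EReal) : EReal :=
  ((∫⁻ x, posE (h x) ∂P : ℝ≥0∞) : EReal) - ((∫⁻ x, posE (-(h x)) ∂P : ℝ≥0∞) : EReal)

/-- The Legendre transform `f*(y) = sup_x {x*y - f(x)}` of `f : ℝ → (-∞,∞]`. -/
def fstar (f : ℝ → EReal) (y : ℝ) : EReal := ⨆ x : ℝ, (((x * y : ℝ) : EReal) - f x)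

/-- `f : ℝ → (-∞,∞]` is (the convex LSC extension of) an element of `F₁(a,b)`:
convex, lower semicontinuous, never `-∞`, finite exactly on the interval `(a,b)`
(with `+∞` strictly outside `[a,b]`), and `f(1) = 0` with `a < 1 < b`. -/
structure IsF1 (a b : EReal) (f : ℝ → EReal) : Prop where
  a_lt_one : a < ((1 : ℝ) : EReal)
  one_lt_b : ((1 : ℝ) : EReal) < b
  convex : ∀ x y t : ℝ, 0 < t → t < 1 →
    f (t * x + (1 - t) * y) ≤ ((t : ℝ) : EReal) * f x + (((1 - t : ℝ)) : EReal) * f y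
  lsc : LowerSemicontinuous f
  ne_bot : ∀ x, f x ≠ ⊥
  finite_on : ∀ x : ℝ, a < (x : EReal) → (x : EReal) < b → f x ≠ ⊤
  top_outside : ∀ x : ℝ, ((x : EReal) < a ∨ b < (x : EReal)) → f x = ⊤
  at_one : f 1 = 0

/-- `Λ_f^P[g] = inf_{ν ∈ ℝ} {ν + E_P[f*(g - ν)]}`. -/
def LambdaF {Ω : Type*} [MeasurableSpace Ω] (f : ℝ → EReal) (P : Measure Ω) (g : Ω → ℝ) :
    EReal :=
  ⨅ ν : ℝ, ((ν : EReal) + eIntegral P (fun x => fstar f (g x - ν)))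

/-- The classical `f`-divergence `D_f(Q‖P) = E_P[f(dQ/dP)]` if `Q ≪ P`, else `∞`. -/
def fDivE {Ω : Type*} [MeasurableSpace Ω] (f : ℝ → EReal) (Q P : Measure Ω) : EReal :=
  if Q ≪ P then eIntegral P (fun x => f ((Q.rnDeriv P x).toReal)) else ⊤

/-- The `(f,Γ)`-divergence `D_f^Γ(Q‖P) = sup_{g ∈ Γ} {E_Q[g] - Λ_f^P[g]}`. -/
def fGammaDiv {Ω : Type*} [MeasurableSpace Ω] (f : ℝ → EReal) (Γ : Set (Ω → ℝ))
    (Q P : Measure Ω) : EReal :=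
  ⨆ g ∈ Γ, (((∫ x, g x ∂Q : ℝ) : EReal) - LambdaF f P g)

/-- The `Γ`-IPM `W^Γ(Q,P) = sup_{g ∈ Γ} {E_Q[g] - E_P[g]}`. -/
def ipmW {Ω : Type*} [MeasurableSpace Ω] (Γ : Set (Ω → ℝ)) (Q P : Measure Ω) : EReal :=
  ⨆ g ∈ Γ, (((∫ x, g x ∂Q : ℝ) : EReal) - ((∫ x, g x ∂P : ℝ) : EReal))

end

/-- A set `Ψ` of functions is `P(Ω)`-determining: if two probability measures give the
same integral to every `ψ ∈ Ψ`, then they are equal. -/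
def Determining {Ω : Type*} [MeasurableSpace Ω] (Ψ : Set (Ω → ℝ)) : Prop :=
  ∀ Q P : Measure Ω, IsProbabilityMeasure Q → IsProbabilityMeasure P →
    (∀ ψ ∈ Ψ, (∫ x, ψ x ∂Q) = ∫ x, ψ x ∂P) → Q = P

noncomputable section AuxLemmas

lemma posE_mono {x y : EReal} (h : x ≤ y) : posE x ≤ posE y := by
  unfold posE
  split_ifs with hx hy hy
  · exact le_rfl
  · exact absurd (top_le_iff.1 (hx ▸ h)) hy
  · exact le_top
  · by_cases hb : x = ⊥
    · simp [hb]
    · exact ENNReal.ofReal_le_ofReal (EReal.toReal_le_toReal h hb hy)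

variable {Ω : Type*} [MeasurableSpace Ω] {P : Measure Ω}

lemma eIntegral_mono_coe (P : Measure Ω) (h : Ω → EReal) (φ : Ω → ℝ)
    (hle : ∀ x, h x ≤ ((φ x : ℝ) : EReal)) :
    eIntegral P h ≤ eIntegral P (fun x => ((φ x : ℝ) : EReal)) := by
  unfold eIntegral
  refine EReal.sub_le_sub ?_ ?_
  · exact EReal.coe_ennreal_le_coe_ennreal_iff.2
      (lintegral_mono fun x => posE_mono (hle x))
  · exact EReal.coe_ennreal_le_coe_ennreal_iff.2
      (lintegral_mono fun x => posE_mono (EReal.neg_le_neg_iff.2 (hle x)))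

lemma integrable_of_bdd [IsFiniteMeasure P] {φ : Ω → ℝ} (hm : Measurable φ)
    {C : ℝ} (hC : ∀ x, |φ x| ≤ C) : Integrable φ P :=
  (integrable_const C).mono' hm.aestronglyMeasurable (ae_of_all _ fun x => by
    simpa using hC x)

lemma ofReal_eq_ofReal_max (r : ℝ) : ENNReal.ofReal r = ENNReal.ofReal (max r 0) := by
  rcases le_total r 0 with h | h
  · rw [ENNReal.ofReal_of_nonpos h, max_eq_right h, ENNReal.ofReal_zero]
  · rw [max_eq_left h]

lemma eIntegral_coe_eq [IsFiniteMeasure P] {φ : Ω → ℝ} (hm : Measurable φ)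
    {C : ℝ} (hC : ∀ x, |φ x| ≤ C) :
    eIntegral P (fun x => ((φ x : ℝ) : EReal)) = ((∫ x, φ x ∂P : ℝ) : EReal) := by
  have hint : Integrable φ P := integrable_of_bdd hm hC
  have hp : Integrable (fun x => max (φ x) 0) P := hint.pos_part
  have hn : Integrable (fun x => max (-φ x) 0) P := hint.neg_part
  have e1 : (∫⁻ x, posE ((φ x : ℝ) : EReal) ∂P)
      = ENNReal.ofReal (∫ x, max (φ x) 0 ∂P) := by
    rw [ofReal_integral_eq_lintegral_ofReal hp (ae_of_all _ fun x => le_max_right _ _)]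
    refine lintegral_congr fun x => ?_
    simp only [posE, if_neg (EReal.coe_ne_top _), EReal.toReal_coe]
    exact ofReal_eq_ofReal_max _
  have e2 : (∫⁻ x, posE (-((φ x : ℝ) : EReal)) ∂P)
      = ENNReal.ofReal (∫ x, max (-φ x) 0 ∂P) := by
    rw [ofReal_integral_eq_lintegral_ofReal hn (ae_of_all _ fun x => le_max_right _ _)]
    refine lintegral_congr fun x => ?_
    rw [← EReal.coe_neg]
    simp only [posE, if_neg (EReal.coe_ne_top _), EReal.toReal_coe]
    exact ofReal_eq_ofReal_max _
  have hA : 0 ≤ ∫ x, max (φ x) 0 ∂P := integral_nonneg fun x => le_max_right _ _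
  have hB : 0 ≤ ∫ x, max (-φ x) 0 ∂P := integral_nonneg fun x => le_max_right _ _
  unfold eIntegral
  rw [e1, e2, EReal.coe_ennreal_ofReal, EReal.coe_ennreal_ofReal,
    max_eq_left hA, max_eq_left hB, ← EReal.coe_sub, ← integral_sub hp hn]
  norm_cast
  refine integral_congr_ae (ae_of_all _ fun x => ?_)
  exact max_zero_sub_max_neg_zero_eq_self _

end AuxLemmas


noncomputable section Aux2

variable {a b : EReal} {f : ℝ → EReal} {ν₀ : ℝ}

lemma fstar_ge (hf : IsF1 a b f) (y : ℝ) : ((y : ℝ) : EReal) ≤ fstar f y := by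
  have h := le_iSup (fun x : ℝ => ((x * y : ℝ) : EReal) - f x) 1
  simp only [one_mul, hf.at_one] at h
  calc ((y : ℝ) : EReal) = ((y : ℝ) : EReal) - 0 := by
        rw [sub_eq_add_neg, neg_zero, add_zero]
    _ ≤ fstar f y := h

lemma fstar_ne_bot (hf : IsF1 a b f) (y : ℝ) : fstar f y ≠ ⊥ :=
  fun h => by simpa [h] using fstar_ge hf y

/-- The linear lower bound `f x ≥ ν₀ (x - 1)` where `ν₀ = f'₊(1)`. -/
lemma lin_le (hf : IsF1 a b f)
    (hν₀ : Filter.Tendsto (fun x : ℝ => (f x).toReal / (x - 1)) (𝓝[>] (1 : ℝ)) (𝓝 ν₀))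
    (x : ℝ) : ((ν₀ * (x - 1) : ℝ) : EReal) ≤ f x := by
  rcases lt_trichotomy x 1 with hx | hx | hx
  · -- x < 1
    by_cases hfx : f x = ⊤
    · simp [hfx]
    have hxR : f x = (((f x).toReal : ℝ) : EReal) := (EReal.coe_toReal hfx (hf.ne_bot x)).symm
    set R := (f x).toReal with hR
    -- eventually (in s → 1⁺) : R / (x-1) ≤ (f s).toReal / (s-1)
    have hev : ∀ᶠ s in 𝓝[>] (1 : ℝ), R / (x - 1) ≤ (f s).toReal / (s - 1) := by
      have hUb : {s : ℝ | (s : EReal) < b} ∈ 𝓝 (1 : ℝ) :=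
        (isOpen_Iio.preimage continuous_coe_real_ereal).mem_nhds hf.one_lt_b
      filter_upwards [self_mem_nhdsWithin, mem_nhdsWithin_of_mem_nhds hUb] with s hs hsb
      have hs1 : (1 : ℝ) < s := hs
      have hfs_top : f s ≠ ⊤ :=
        hf.finite_on s (hf.a_lt_one.trans (EReal.coe_lt_coe_iff.2 hs1)) hsb
      have hfsR : f s = (((f s).toReal : ℝ) : EReal) :=
        (EReal.coe_toReal hfs_top (hf.ne_bot s)).symm
      set S := (f s).toReal
      set t := (s - 1) / (s - x) with ht
      have hsx : 0 < s - x := by linarith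
      have ht0 : 0 < t := div_pos (by linarith) hsx
      have ht1 : t < 1 := (div_lt_one hsx).2 (by linarith)
      have hcomb : t * x + (1 - t) * s = 1 := by
        rw [ht]
        linear_combination (-1 : ℝ) * (div_mul_cancel₀ (s - 1) hsx.ne' : (s - 1) / (s - x) * (s - x) = s - 1)
      have hconv := hf.convex x s t ht0 ht1
      rw [hcomb, hf.at_one, hxR, hfsR, ← EReal.coe_mul, ← EReal.coe_mul,
        ← EReal.coe_add] at hconv
      have h0 : (0 : ℝ) ≤ t * R + (1 - t) * S := by exact_mod_cast hconv
      -- deduce R / (x-1) ≤ S / (s-1)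
      have ht' : t * (s - x) = s - 1 := div_mul_cancel₀ _ hsx.ne'
      have h0' : 0 ≤ (s - 1) * R + (1 - x) * S := by
        have hm := mul_nonneg h0 hsx.le
        have expand : (t * R + (1 - t) * S) * (s - x) = (s - 1) * R + (1 - x) * S := by
          linear_combination (R - S) * ht'
        linarith [expand ▸ hm]
      rw [div_le_iff_of_neg (by linarith : x - 1 < (0:ℝ)), div_mul_eq_mul_div,
        div_le_iff₀ (by linarith : (0:ℝ) < s - 1)]
      nlinarith [h0']
    have hle := ge_of_tendsto hν₀ hev
    rw [hxR]
    have hfin : ν₀ * (x - 1) ≤ R := by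
      have := (div_le_iff_of_neg (by linarith : x - 1 < (0:ℝ))).1 hle
      linarith
    exact_mod_cast hfin
  · simp [hx, hf.at_one]
  · -- 1 < x
    by_cases hfx : f x = ⊤
    · simp [hfx]
    have hxR : f x = (((f x).toReal : ℝ) : EReal) := (EReal.coe_toReal hfx (hf.ne_bot x)).symm
    set R := (f x).toReal with hR
    have hev : ∀ᶠ s in 𝓝[>] (1 : ℝ), (f s).toReal / (s - 1) ≤ R / (x - 1) := by
      filter_upwards [Ioo_mem_nhdsGT hx] with s hs
      obtain ⟨hs1, hsx⟩ := hs
      set θ := (s - 1) / (x - 1) with hθ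
      have hx1 : (0:ℝ) < x - 1 := by linarith
      have hθ0 : 0 < θ := div_pos (by linarith) hx1
      have hθ1 : θ < 1 := (div_lt_one hx1).2 (by linarith)
      have hcomb : θ * x + (1 - θ) * 1 = s := by
        rw [hθ]
        linear_combination (div_mul_cancel₀ (s - 1) hx1.ne' : (s - 1) / (x - 1) * (x - 1) = s - 1)
      have hconv := hf.convex x 1 θ hθ0 hθ1
      rw [hcomb, hf.at_one, mul_zero, add_zero, hxR, ← EReal.coe_mul] at hconv
      have hS : (f s).toReal ≤ θ * R :=
        EReal.toReal_le_toReal hconv (hf.ne_bot s) (EReal.coe_ne_top _)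
      calc (f s).toReal / (s - 1) ≤ θ * R / (s - 1) :=
            (div_le_div_iff_of_pos_right (by linarith : (0:ℝ) < s - 1)).2 hS
        _ = R / (x - 1) := by
            have hs1' : s - 1 ≠ 0 := by linarith
            have hx1' : x - 1 ≠ 0 := by linarith
            rw [hθ]
            field_simp
    have hle := le_of_tendsto hν₀ hev
    rw [hxR]
    have hfin : ν₀ * (x - 1) ≤ R := by
      have hx1 : (0:ℝ) < x - 1 := by linarith
      have := (le_div_iff₀ hx1).1 hle
      linarith
    exact_mod_cast hfin

lemma fstar_nu0 (hf : IsF1 a b f)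
    (hν₀ : Filter.Tendsto (fun x : ℝ => (f x).toReal / (x - 1)) (𝓝[>] (1 : ℝ)) (𝓝 ν₀)) :
    fstar f ν₀ = ((ν₀ : ℝ) : EReal) := by
  refine le_antisymm (iSup_le fun x => ?_) (fstar_ge hf ν₀)
  calc ((x * ν₀ : ℝ) : EReal) - f x
      ≤ ((x * ν₀ : ℝ) : EReal) - ((ν₀ * (x - 1) : ℝ) : EReal) :=
        EReal.sub_le_sub le_rfl (lin_le hf hν₀ x)
    _ = ((ν₀ : ℝ) : EReal) := by
        rw [← EReal.coe_sub]
        norm_cast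
        ring

/-- Quantitative remainder bound for `fstar` near `ν₀`. -/
lemma fstar_rem (hf : IsF1 a b f)
    (hν₀ : Filter.Tendsto (fun x : ℝ => (f x).toReal / (x - 1)) (𝓝[>] (1 : ℝ)) (𝓝 ν₀))
    {δ : ℝ} (hδ : 0 < δ) (hfin : ∀ y : ℝ, |y - ν₀| < δ → fstar f y ≠ ⊤)
    (hC1 : ContDiffOn ℝ 1 (fun y => (fstar f y).toReal) (Metric.ball ν₀ δ))
    {η : ℝ} (hη : 0 < η) :
    ∃ δ' : ℝ, 0 < δ' ∧ δ' ≤ δ ∧ ∀ t : ℝ, |t| ≤ δ' →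
      fstar f (ν₀ + t) ≤ ((ν₀ + t + η * δ' : ℝ) : EReal) := by
  set F : ℝ → ℝ := fun y => (fstar f y).toReal with hF
  have hball : ∀ y ∈ Metric.ball ν₀ δ, fstar f y = ((F y : ℝ) : EReal) := by
    intro y hy
    rw [Metric.mem_ball, Real.dist_eq] at hy
    exact (EReal.coe_toReal (hfin y hy) (fstar_ne_bot hf y)).symm
  have hmem : ν₀ ∈ Metric.ball ν₀ δ := Metric.mem_ball_self hδ
  have hdiff : ∀ y ∈ Metric.ball ν₀ δ, DifferentiableAt ℝ F y := fun y hy =>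
    ((hC1.differentiableOn one_ne_zero) y hy).differentiableAt
      (Metric.isOpen_ball.mem_nhds hy)
  have hFν₀ : F ν₀ = ν₀ := by rw [hF]; simp [fstar_nu0 hf hν₀]
  have hge : ∀ y ∈ Metric.ball ν₀ δ, y ≤ F y := by
    intro y hy
    have := fstar_ge hf y
    rw [hball y hy] at this
    exact_mod_cast this
  -- derivative of F at ν₀ is 1
  have hderiv1 : deriv F ν₀ = 1 := by
    have hGdiff : DifferentiableAt ℝ (fun y => F y - y) ν₀ :=
      (hdiff ν₀ hmem).sub differentiableAt_fun_id
    have hmin : IsLocalMin (fun y => F y - y) ν₀ := by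
      filter_upwards [Metric.isOpen_ball.mem_nhds hmem] with y hy
      have := hge y hy
      simp only [hFν₀]
      linarith
    have h0 := hmin.deriv_eq_zero
    rw [deriv_fun_sub (hdiff ν₀ hmem) differentiableAt_fun_id] at h0
    simp only [deriv_id''] at h0
    linarith
  -- continuity of the derivative at ν₀
  have hcont : ContinuousAt (deriv F) ν₀ :=
    (hC1.continuousOn_deriv_of_isOpen Metric.isOpen_ball le_rfl).continuousAt
      (Metric.isOpen_ball.mem_nhds hmem)
  obtain ⟨δ₂, hδ₂, hδ₂'⟩ := Metric.continuousAt_iff.1 hcont η hη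
  refine ⟨min (δ₂ / 2) (δ / 2), by positivity, le_trans (min_le_right _ _) (by linarith), ?_⟩
  set δ' := min (δ₂ / 2) (δ / 2) with hδ'
  intro t ht
  have hδ'δ : δ' < δ := lt_of_le_of_lt (min_le_right _ _) (by linarith)
  have hδ'δ₂ : δ' < δ₂ := lt_of_le_of_lt (min_le_left _ _) (by linarith)
  have hδ'pos : 0 < δ' := by positivity
  -- MVT on the small ball
  set s : Set ℝ := Metric.ball ν₀ (min δ₂ δ) with hs
  have hsub : s ⊆ Metric.ball ν₀ δ := Metric.ball_subset_ball (min_le_right _ _)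
  have hGd : ∀ y ∈ s, DifferentiableAt ℝ (fun y => F y - y) y := fun y hy =>
    (hdiff y (hsub hy)).sub differentiableAt_fun_id
  have hbound : ∀ y ∈ s, ‖deriv (fun y => F y - y) y‖ ≤ η := by
    intro y hy
    have hyd : deriv (fun y => F y - y) y = deriv F y - 1 := by
      rw [deriv_fun_sub (hdiff y (hsub hy)) differentiableAt_fun_id, deriv_id'']
    rw [hyd, Real.norm_eq_abs]
    have hyδ₂ : dist y ν₀ < δ₂ := lt_of_lt_of_le (Metric.mem_ball.1 hy) (min_le_left _ _)
    have := hδ₂' hyδ₂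
    rw [hderiv1] at this
    rw [Real.dist_eq] at this
    exact this.le
  have hmem₁ : ν₀ ∈ s := Metric.mem_ball_self (lt_min hδ₂ hδ)
  have hmem₂ : ν₀ + t ∈ s := by
    rw [Metric.mem_ball, Real.dist_eq]
    have : |ν₀ + t - ν₀| = |t| := by ring_nf
    rw [this]
    exact lt_of_le_of_lt ht (lt_min hδ'δ₂ hδ'δ)
  have hmvt := (convex_ball ν₀ (min δ₂ δ)).norm_image_sub_le_of_norm_deriv_le
    hGd hbound hmem₁ hmem₂
  simp only [hFν₀] at hmvt
  rw [Real.norm_eq_abs, Real.norm_eq_abs] at hmvt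
  have habs : |F (ν₀ + t) - (ν₀ + t) - (ν₀ - ν₀)| = |F (ν₀ + t) - (ν₀ + t)| := by
    ring_nf
  rw [habs] at hmvt
  have hF' : F (ν₀ + t) ≤ ν₀ + t + η * δ' := by
    have h1 : F (ν₀ + t) - (ν₀ + t) ≤ |F (ν₀ + t) - (ν₀ + t)| := le_abs_self _
    have h2 : |ν₀ + t - ν₀| = |t| := by ring_nf
    rw [h2] at hmvt
    have h3 : η * |t| ≤ η * δ' := mul_le_mul_of_nonneg_left ht hη.le
    linarith
  rw [hball (ν₀ + t) (hsub hmem₂)]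
  exact_mod_cast hF'


end Aux2

noncomputable section Aux3

variable {Ω : Type*} [MeasurableSpace Ω]

lemma main_est (f : ℝ → EReal) (ν₀ : ℝ) (Γ : Set (Ω → ℝ)) (ψ : Ω → ℝ) (hψm : Measurable ψ)
    {C : ℝ} (hC : ∀ x, |ψ x| ≤ C)
    (c₀ ε : ℝ) (hg : (fun x => c₀ + ε * ψ x) ∈ Γ)
    {η δ' : ℝ} (hη : 0 ≤ η) (hδ' : 0 ≤ δ')
    (hrem : ∀ t : ℝ, |t| ≤ δ' → fstar f (ν₀ + t) ≤ ((ν₀ + t + η * δ' : ℝ) : EReal))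
    (hsm : 2 * C * |ε| ≤ δ')
    (ρ μ : Measure Ω) [IsProbabilityMeasure ρ] [IsProbabilityMeasure μ] :
    ((ε * ((∫ x, ψ x ∂ρ) - (∫ x, ψ x ∂μ)) - η * δ' : ℝ) : EReal) ≤ fGammaDiv f Γ ρ μ := by
  set m := ∫ x, ψ x ∂μ with hm
  set q := ∫ x, ψ x ∂ρ with hq
  set g : Ω → ℝ := fun x => c₀ + ε * ψ x with hgdef
  have hintμ : Integrable ψ μ := integrable_of_bdd hψm hC
  have hintρ : Integrable ψ ρ := integrable_of_bdd hψm hC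
  have hmabs : |m| ≤ C := by
    have := norm_integral_le_of_norm_le_const (μ := μ) (f := ψ) (C := C)
      (ae_of_all _ fun x => by simpa using hC x)
    simpa [hm, measure_univ] using this
  -- value of the integral of g
  have hgρ : ∫ x, g x ∂ρ = c₀ + ε * q := by
    rw [hgdef]
    rw [integral_add (integrable_const _) (hintρ.const_mul ε), integral_const,
      integral_const_mul ε _]
    simp [measure_univ, hq]
  -- bound on LambdaF
  set nuh : ℝ := c₀ + ε * m - ν₀ with hnuh
  set φ : Ω → ℝ := fun x => (ν₀ + η * δ') + ε * (ψ x - m) with hφ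
  have hpt : ∀ x, fstar f (g x - nuh) ≤ ((φ x : ℝ) : EReal) := by
    intro x
    have harg : g x - nuh = ν₀ + ε * (ψ x - m) := by rw [hgdef, hnuh]; ring
    rw [harg]
    have habs : |ε * (ψ x - m)| ≤ δ' := by
      rw [abs_mul]
      calc |ε| * |ψ x - m| ≤ |ε| * (2 * C) := by
            refine mul_le_mul_of_nonneg_left ?_ (abs_nonneg _)
            calc |ψ x - m| ≤ |ψ x| + |m| := abs_sub _ _
              _ ≤ 2 * C := by linarith [hC x]
        _ = 2 * C * |ε| := by ring
        _ ≤ δ' := hsm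
    have := hrem (ε * (ψ x - m)) habs
    calc fstar f (ν₀ + ε * (ψ x - m)) ≤ ((ν₀ + ε * (ψ x - m) + η * δ' : ℝ) : EReal) := this
      _ = ((φ x : ℝ) : EReal) := by rw [hφ]; norm_cast; ring
  have hφm : Measurable φ := by
    apply Measurable.add measurable_const
    exact (hψm.sub measurable_const).const_mul ε
  have hφb : ∀ x, |φ x| ≤ |ν₀ + η * δ'| + |ε| * (2 * C) := by
    intro x
    calc |φ x| ≤ |ν₀ + η * δ'| + |ε * (ψ x - m)| := abs_add_le _ _
      _ ≤ |ν₀ + η * δ'| + |ε| * (2 * C) := by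
          rw [abs_mul]
          refine add_le_add le_rfl (mul_le_mul_of_nonneg_left ?_ (abs_nonneg _))
          calc |ψ x - m| ≤ |ψ x| + |m| := abs_sub _ _
            _ ≤ 2 * C := by linarith [hC x]
  have hφint : ∫ x, φ x ∂μ = ν₀ + η * δ' := by
    rw [hφ]
    have h1 : Integrable (fun x => ε * (ψ x - m)) μ :=
      (hintμ.sub (integrable_const m)).const_mul ε
    rw [integral_add (integrable_const _) h1, integral_const, integral_const_mul ε _,
      integral_sub hintμ (integrable_const m), integral_const]
    simp [measure_univ, hm]
  have hΛ : LambdaF f μ g ≤ ((c₀ + ε * m + η * δ' : ℝ) : EReal) := by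
    have h1 : LambdaF f μ g ≤ (nuh : EReal) + eIntegral μ (fun x => fstar f (g x - nuh)) :=
      iInf_le _ nuh
    have h2 : eIntegral μ (fun x => fstar f (g x - nuh))
        ≤ eIntegral μ (fun x => ((φ x : ℝ) : EReal)) := eIntegral_mono_coe μ _ φ hpt
    have h3 : eIntegral μ (fun x => ((φ x : ℝ) : EReal)) = ((∫ x, φ x ∂μ : ℝ) : EReal) :=
      eIntegral_coe_eq hφm hφb
    calc LambdaF f μ g ≤ (nuh : EReal) + eIntegral μ (fun x => fstar f (g x - nuh)) := h1
      _ ≤ (nuh : EReal) + ((∫ x, φ x ∂μ : ℝ) : EReal) := by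
          rw [← h3] at *
          exact add_le_add le_rfl h2
      _ = ((c₀ + ε * m + η * δ' : ℝ) : EReal) := by
          rw [hφint, ← EReal.coe_add, hnuh]
          norm_cast
          ring
  have hfinal : ((∫ x, g x ∂ρ : ℝ) : EReal) - LambdaF f μ g ≤ fGammaDiv f Γ ρ μ :=
    le_iSup₂ (f := fun g (_ : g ∈ Γ) => ((∫ x, g x ∂ρ : ℝ) : EReal) - LambdaF f μ g) g hg
  calc ((ε * (q - m) - η * δ' : ℝ) : EReal)
      = ((c₀ + ε * q : ℝ) : EReal) - ((c₀ + ε * m + η * δ' : ℝ) : EReal) := by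
        rw [← EReal.coe_sub]
        norm_cast
        ring
    _ ≤ ((∫ x, g x ∂ρ : ℝ) : EReal) - LambdaF f μ g := by
        rw [hgρ]
        exact EReal.sub_le_sub le_rfl hΛ
    _ ≤ fGammaDiv f Γ ρ μ := hfinal


end Aux3

/-- Under assumptions (a)-(c), if `D_f^Γ(Q_n‖P) → 0` or
`D_f^Γ(P‖Q_n) → 0` then `E_{Q_n}[ψ] → E_P[ψ]` for every `ψ ∈ Ψ`. -/
theorem stmt14 {Ω : Type*} [MeasurableSpace Ω] (a b : EReal) (f : ℝ → EReal)
    (hf : IsF1 a b f)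
    (Γ : Set (Ω → ℝ)) (hΓ : Γ ⊆ Mb Ω) (hne : Γ.Nonempty)
    -- (a) a nonempty `P(Ω)`-determining set `Ψ ⊆ Γ`, stable under small affine perturbations
    (Ψ : Set (Ω → ℝ)) (hΨne : Ψ.Nonempty) (hΨΓ : Ψ ⊆ Γ) (hdet : Determining Ψ)
    (hpert : ∀ ψ ∈ Ψ, ∃ c₀ ε₀ : ℝ, 0 < ε₀ ∧
      ∀ ε : ℝ, |ε| < ε₀ → (fun x => c₀ + ε * ψ x) ∈ Γ)
    -- (b) `f` is strictly convex on a neighborhood of `1`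
    (hb : ∃ δ : ℝ, 0 < δ ∧ ∀ x y t : ℝ, |x - 1| < δ → |y - 1| < δ → x ≠ y → 0 < t → t < 1 →
      f (t * x + (1 - t) * y) < ((t : ℝ) : EReal) * f x + (((1 - t : ℝ)) : EReal) * f y)
    -- (c) `f*` is finite and `C¹` on a neighborhood of `ν₀ := f'₊(1)`
    (ν₀ : ℝ)
    (hν₀ : Filter.Tendsto (fun x : ℝ => (f x).toReal / (x - 1)) (𝓝[>] (1 : ℝ)) (𝓝 ν₀))
    (hc : ∃ δ : ℝ, 0 < δ ∧ (∀ y : ℝ, |y - ν₀| < δ → fstar f y ≠ ⊤) ∧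
      ContDiffOn ℝ 1 (fun y => (fstar f y).toReal) (Metric.ball ν₀ δ))
    (P : Measure Ω) [IsProbabilityMeasure P]
    (Q : ℕ → Measure Ω) (hQ : ∀ n, IsProbabilityMeasure (Q n))
    (hconv : Filter.Tendsto (fun n => fGammaDiv f Γ (Q n) P) Filter.atTop (𝓝 0)
      ∨ Filter.Tendsto (fun n => fGammaDiv f Γ P (Q n)) Filter.atTop (𝓝 0)) :
    ∀ ψ ∈ Ψ, Filter.Tendsto (fun n => ∫ x, ψ x ∂(Q n)) Filter.atTop
      (𝓝 (∫ x, ψ x ∂P)) := by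

  intro ψ hψ
  obtain ⟨hψm, C₀, hψC₀⟩ := hΓ (hΨΓ hψ)
  set C := max C₀ 1 with hCdef
  have hCb : ∀ x, |ψ x| ≤ C := fun x => (hψC₀ x).trans (le_max_left _ _)
  have hC1 : (1:ℝ) ≤ C := le_max_right _ _
  have hCpos : (0:ℝ) < C := lt_of_lt_of_le one_pos hC1
  obtain ⟨c₀, ε₀, hε₀, hpert'⟩ := hpert ψ hψ
  obtain ⟨δ, hδ, hfin, hcC1⟩ := hc
  set m := ∫ x, ψ x ∂P with hmdef
  rw [Metric.tendsto_atTop]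
  intro r hr
  set K : ℝ := max (2*C) (2*δ/ε₀) with hK
  have hKpos : (0:ℝ) < K := lt_of_lt_of_le (by positivity) (le_max_left _ _)
  set η := r/(4*K) with hηdef
  have hηpos : 0 < η := by positivity
  obtain ⟨δ', hδ'pos, hδ'le, hrem⟩ := fstar_rem hf hν₀ hδ hfin hcC1 hηpos
  set ε := min (δ'/(2*C)) (ε₀/2) with hεdef
  have hεpos : 0 < ε := lt_min (by positivity) (by positivity)
  have hεlt : ε < ε₀ := lt_of_le_of_lt (min_le_right _ _) (by linarith)
  have h2Cε : 2*C*ε ≤ δ' := by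
    have h1 : ε ≤ δ'/(2*C) := min_le_left _ _
    calc 2*C*ε ≤ 2*C*(δ'/(2*C)) := mul_le_mul_of_nonneg_left h1 (by positivity)
      _ = δ' := by field_simp
  have h2Cε' : 2*C*|ε| ≤ δ' := by rwa [abs_of_pos hεpos]
  have h2Cε'' : 2*C*|-ε| ≤ δ' := by rwa [abs_neg, abs_of_pos hεpos]
  have hεlt' : |ε| < ε₀ := by rwa [abs_of_pos hεpos]
  have hεlt'' : |-ε| < ε₀ := by rwa [abs_neg, abs_of_pos hεpos]
  have hηδ' : η * δ' ≤ (r/4) * ε := by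
    have hδ'K : δ' ≤ K * ε := by
      rcases le_total (δ'/(2*C)) (ε₀/2) with h | h
      · have he : ε = δ'/(2*C) := min_eq_left h
        have : 2*C*(δ'/(2*C)) = δ' := by field_simp
        calc δ' = 2*C*(δ'/(2*C)) := this.symm
          _ ≤ K * (δ'/(2*C)) :=
            mul_le_mul_of_nonneg_right (le_max_left _ _) (by positivity)
          _ = K * ε := by rw [he]
      · have he : ε = ε₀/2 := min_eq_right h
        calc δ' ≤ δ := hδ'le
          _ = (2*δ/ε₀) * (ε₀/2) := by field_simp
          _ ≤ K * (ε₀/2) :=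
            mul_le_mul_of_nonneg_right (le_max_right _ _) (by positivity)
          _ = K * ε := by rw [he]
    calc η * δ' ≤ η * (K * ε) := mul_le_mul_of_nonneg_left hδ'K hηpos.le
      _ = (r/4) * ε := by rw [hηdef]; field_simp
  have hgmem : ∀ (e:ℝ), |e| < ε₀ → (fun x => c₀ + e*ψ x) ∈ Γ := hpert'
  have hrpos4 : (0:EReal) < (((r/4)*ε : ℝ) : EReal) := by
    have : (0:ℝ) < (r/4)*ε := by positivity
    exact_mod_cast this
  have key : ∀ n, IsProbabilityMeasure (Q n) → 
      (((ε * ((∫ x, ψ x ∂(Q n)) - m) - η * δ' : ℝ) : EReal) ≤ fGammaDiv f Γ (Q n) P ∧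
       ((-ε * ((∫ x, ψ x ∂(Q n)) - m) - η * δ' : ℝ) : EReal) ≤ fGammaDiv f Γ (Q n) P) ∧
      (((ε * (m - (∫ x, ψ x ∂(Q n))) - η * δ' : ℝ) : EReal) ≤ fGammaDiv f Γ P (Q n) ∧
       ((-ε * (m - (∫ x, ψ x ∂(Q n))) - η * δ' : ℝ) : EReal) ≤ fGammaDiv f Γ P (Q n)) := by
    intro n hQn
    haveI := hQn
    refine ⟨⟨?_, ?_⟩, ?_, ?_⟩
    · exact main_est f ν₀ Γ ψ hψm hCb c₀ ε (hgmem ε hεlt') hηpos.le hδ'pos.le hrem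
        h2Cε' (Q n) P
    · exact main_est f ν₀ Γ ψ hψm hCb c₀ (-ε) (hgmem (-ε) hεlt'') hηpos.le hδ'pos.le hrem
        h2Cε'' (Q n) P
    · exact main_est f ν₀ Γ ψ hψm hCb c₀ ε (hgmem ε hεlt') hηpos.le hδ'pos.le hrem
        h2Cε' P (Q n)
    · exact main_est f ν₀ Γ ψ hψm hCb c₀ (-ε) (hgmem (-ε) hεlt'') hηpos.le hδ'pos.le hrem
        h2Cε'' P (Q n)
  have conclude : ∀ n, fGammaDiv f Γ (Q n) P < (((r/4)*ε : ℝ) : EReal) ∨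
      fGammaDiv f Γ P (Q n) < (((r/4)*ε : ℝ) : EReal) → dist (∫ x, ψ x ∂(Q n)) m < r := by
    intro n hlt
    obtain ⟨⟨h1, h2⟩, h3, h4⟩ := key n (hQ n)
    rw [Real.dist_eq]
    set qn := ∫ x, ψ x ∂(Q n)
    have habs : ε * |qn - m| ≤ η * δ' + (r/4)*ε := by
      rcases hlt with hlt | hlt
      · have e1 : ε * (qn - m) - η * δ' < (r/4)*ε := by
          exact_mod_cast lt_of_le_of_lt h1 hlt
        have e2 : -ε * (qn - m) - η * δ' < (r/4)*ε := by
          exact_mod_cast lt_of_le_of_lt h2 hlt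
        rcases abs_cases (qn - m) with ⟨he, _⟩ | ⟨he, _⟩ <;> rw [he] <;> nlinarith
      · have e1 : ε * (m - qn) - η * δ' < (r/4)*ε := by
          exact_mod_cast lt_of_le_of_lt h3 hlt
        have e2 : -ε * (m - qn) - η * δ' < (r/4)*ε := by
          exact_mod_cast lt_of_le_of_lt h4 hlt
        rcases abs_cases (qn - m) with ⟨he, _⟩ | ⟨he, _⟩ <;> rw [he] <;> nlinarith
    have : ε * |qn - m| ≤ (r/2)*ε := by
      calc ε * |qn - m| ≤ η * δ' + (r/4)*ε := habs
        _ ≤ (r/4)*ε + (r/4)*ε := by linarith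
        _ = (r/2)*ε := by ring
    have hle : |qn - m| ≤ r/2 := by
      by_contra hcon
      push_neg at hcon
      nlinarith
    linarith
  rcases hconv with hD | hD
  · have hev := hD.eventually_lt_const hrpos4
    obtain ⟨N, hN⟩ := Filter.eventually_atTop.1 hev
    exact ⟨N, fun n hn => conclude n (Or.inl (hN n hn))⟩
  · have hev := hD.eventually_lt_const hrpos4
    obtain ⟨N, hN⟩ := Filter.eventually_atTop.1 hev
    exact ⟨N, fun n hn => conclude n (Or.inr (hN n hn))⟩
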